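/- Let (B¹, i¹, j¹) and (B², i², j²) be stable framed representations on (V¹, W¹) and (V², W²) respectively, with μ(B¹, i¹, j¹) = 0 and μ(B², i², j²) = 0. Then β²¹ ∘ α²¹ = 0, α²¹ is injective, β²¹ is surjective, and the quotient Ker β²¹ / Im α²¹ has dimension ∑_{k∈I} (dim V¹_k · dim W²_k + dim W¹_k · dim V²_k) − ∑_{k,l∈I} c_{kl} · dim V¹_k · dim V²_l, where c_{kk} = 2 and, for k ≠ l, c_{kl} = −(number of edges joining k and l). -/

import Mathlib

/-!
Framed representations of a quiver attached to a finite graph without edge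
loops, with vertex set `I` and edge set `Ω`, where the edge `e ∈ Ω` joins the
vertices `s e` and `t e`.  The set `H` of oriented edges is `Ω ⊕ Ω`: each
edge occurs with both orientations.  For an `I`-graded complex vector space
`V`, a datum `B ∈ E(V,V)` is encoded by its components `Bp e : V (s e) → V (t e)`
(along `e` oriented from `s e` to `t e`) and `Bm e : V (t e) → V (s e)` (along
the reversed orientation); a datum in `L(V,W)` is a family of maps
`V k → W k`.
-/

noncomputable section

variable {I : Type*} {Ω : Type*}

/-- A framed representation `(B, i, j) ∈ E(V,V) ⊕ L(W,V) ⊕ L(V,W)` on the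
pair `(V, W)` of `I`-graded vector spaces. -/
structure FramedRep (s t : Ω → I) (V W : I → Type*)
    [∀ k, AddCommGroup (V k)] [∀ k, Module ℂ (V k)]
    [∀ k, AddCommGroup (W k)] [∀ k, Module ℂ (W k)] where
  Bp : ∀ e, V (s e) →ₗ[ℂ] V (t e)
  Bm : ∀ e, V (t e) →ₗ[ℂ] V (s e)
  i : ∀ k, W k →ₗ[ℂ] V k
  j : ∀ k, V k →ₗ[ℂ] W k

/-- Stability: the only `B`-invariant `I`-graded subspace `S ⊆ V` contained
in `Ker j` is `S = 0`. -/
def FramedRep.IsStable {s t : Ω → I} {V W : I → Type*}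
    [∀ k, AddCommGroup (V k)] [∀ k, Module ℂ (V k)]
    [∀ k, AddCommGroup (W k)] [∀ k, Module ℂ (W k)]
    (R : FramedRep s t V W) : Prop :=
  ∀ S : ∀ k, Submodule ℂ (V k),
    (∀ e, ∀ x ∈ S (s e), R.Bp e x ∈ S (t e)) →
    (∀ e, ∀ x ∈ S (t e), R.Bm e x ∈ S (s e)) →
    (∀ k, ∀ x ∈ S k, R.j k x = 0) →
    ∀ k, S k = ⊥

/-- Transport of graded components along an equality of vertices. -/
def lcast (V : I → Type*) [∀ k, AddCommGroup (V k)] [∀ k, Module ℂ (V k)]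
    {a b : I} (h : a = b) : V a →ₗ[ℂ] V b := by
  subst h; exact LinearMap.id

section

variable {s t : Ω → I}
variable {V₁ W₁ V₂ W₂ : I → Type*}
  [∀ k, AddCommGroup (V₁ k)] [∀ k, Module ℂ (V₁ k)]
  [∀ k, AddCommGroup (W₁ k)] [∀ k, Module ℂ (W₁ k)]
  [∀ k, AddCommGroup (V₂ k)] [∀ k, Module ℂ (V₂ k)]
  [∀ k, AddCommGroup (W₂ k)] [∀ k, Module ℂ (W₂ k)]

/-- The vanishing of the moment map, `μ(B,i,j) = εBB + ij = 0`: for every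
vertex `k`, `∑_{h : in(h) = k} ε(h) B_h B_h̄ + i_k j_k = 0`, where the sum over
oriented edges `h` into `k` splits into the edges `e` with `t e = k` (with
sign `eps e`) and those with `s e = k` (with sign `−eps e`). -/
def FramedRep.MuZero [Fintype Ω] [DecidableEq I] (eps : Ω → ℂ)
    {V W : I → Type*}
    [∀ k, AddCommGroup (V k)] [∀ k, Module ℂ (V k)]
    [∀ k, AddCommGroup (W k)] [∀ k, Module ℂ (W k)]
    (R : FramedRep s t V W) : Prop :=
  ∀ k : I,
    (∑ e : {e : Ω // t e = k},
        eps e.1 • (lcast V e.2 ∘ₗ R.Bp e.1 ∘ₗ R.Bm e.1 ∘ₗ lcast V e.2.symm))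
    + (∑ e : {e : Ω // s e = k},
        (-eps e.1) • (lcast V e.2 ∘ₗ R.Bm e.1 ∘ₗ R.Bp e.1 ∘ₗ lcast V e.2.symm))
    + R.i k ∘ₗ R.j k = 0

/-- The space `E(V¹,V²) ⊕ L(W¹,V²) ⊕ L(V¹,W²)`, middle term of the complex
`L(V¹,V²) → E(V¹,V²) ⊕ L(W¹,V²) ⊕ L(V¹,W²) → L(V¹,V²)`. -/
abbrev ELL (s t : Ω → I) (V₁ W₁ V₂ W₂ : I → Type*)
    [∀ k, AddCommGroup (V₁ k)] [∀ k, Module ℂ (V₁ k)]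
    [∀ k, AddCommGroup (W₁ k)] [∀ k, Module ℂ (W₁ k)]
    [∀ k, AddCommGroup (V₂ k)] [∀ k, Module ℂ (V₂ k)]
    [∀ k, AddCommGroup (W₂ k)] [∀ k, Module ℂ (W₂ k)] : Type _ :=
  (∀ e, V₁ (s e) →ₗ[ℂ] V₂ (t e)) × (∀ e, V₁ (t e) →ₗ[ℂ] V₂ (s e)) ×
  (∀ k, W₁ k →ₗ[ℂ] V₂ k) × (∀ k, V₁ k →ₗ[ℂ] W₂ k)

/-- The map `α²¹ : L(V¹,V²) → E(V¹,V²) ⊕ L(W¹,V²) ⊕ L(V¹,W²)`,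
`α²¹(ξ) = (B²ξ − ξB¹, −ξi¹, j²ξ)`. -/
def alphaMap (R₁ : FramedRep s t V₁ W₁) (R₂ : FramedRep s t V₂ W₂)
    (ξ : ∀ k, V₁ k →ₗ[ℂ] V₂ k) : ELL s t V₁ W₁ V₂ W₂ :=
  ⟨fun e => R₂.Bp e ∘ₗ ξ (s e) - ξ (t e) ∘ₗ R₁.Bp e,
   fun e => R₂.Bm e ∘ₗ ξ (t e) - ξ (s e) ∘ₗ R₁.Bm e,
   fun k => -(ξ k ∘ₗ R₁.i k),
   fun k => R₂.j k ∘ₗ ξ k⟩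

/-- The `k`-th component of the map
`β²¹ : E(V¹,V²) ⊕ L(W¹,V²) ⊕ L(V¹,W²) → L(V¹,V²)`,
`β²¹(C,I,J)_k = ∑_{h : in(h)=k} ε(h)(B²_h C_h̄ + C_h B¹_h̄) + i²_k J_k + I_k j¹_k`,
where the sum over oriented edges `h` into `k` splits into the edges `e` with
`t e = k` (with sign `eps e`) and those with `s e = k` (with sign `−eps e`). -/
def betaMap [Fintype Ω] [DecidableEq I] (eps : Ω → ℂ)
    (R₁ : FramedRep s t V₁ W₁) (R₂ : FramedRep s t V₂ W₂)
    (x : ELL s t V₁ W₁ V₂ W₂) (k : I) : V₁ k →ₗ[ℂ] V₂ k :=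
  (∑ e : {e : Ω // t e = k},
      eps e.1 • (lcast V₂ e.2 ∘ₗ (R₂.Bp e.1 ∘ₗ x.2.1 e.1 + x.1 e.1 ∘ₗ R₁.Bm e.1)
        ∘ₗ lcast V₁ e.2.symm))
  + (∑ e : {e : Ω // s e = k},
      (-eps e.1) • (lcast V₂ e.2 ∘ₗ (R₂.Bm e.1 ∘ₗ x.1 e.1 + x.2.1 e.1 ∘ₗ R₁.Bp e.1)
        ∘ₗ lcast V₁ e.2.symm))
  + R₂.i k ∘ₗ x.2.2.2 k + x.2.2.1 k ∘ₗ R₁.j k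

end


namespace AlphaBetaAux

open LinearMap Module

variable {I : Type*} {Ω : Type*}

lemma lcast_rfl (V : I → Type*) [∀ k, AddCommGroup (V k)] [∀ k, Module ℂ (V k)]
    {a : I} : lcast V (rfl : a = a) = LinearMap.id := rfl

lemma lcast_natural {A B : I → Type*}
    [∀ k, AddCommGroup (A k)] [∀ k, Module ℂ (A k)]
    [∀ k, AddCommGroup (B k)] [∀ k, Module ℂ (B k)]
    (f : ∀ k, A k →ₗ[ℂ] B k) {a b : I} (h : a = b) :
    f b ∘ₗ lcast A h = lcast B h ∘ₗ f a := by subst h; rfl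

lemma sum_comp'' {ι : Type*} {M N P : Type*}
    [AddCommGroup M] [Module ℂ M] [AddCommGroup N] [Module ℂ N]
    [AddCommGroup P] [Module ℂ P]
    (S : Finset ι) (f : ι → N →ₗ[ℂ] P) (g : M →ₗ[ℂ] N) :
    (∑ i ∈ S, f i) ∘ₗ g = ∑ i ∈ S, f i ∘ₗ g := by
  ext v; simp

lemma comp_sum'' {ι : Type*} {M N P : Type*}
    [AddCommGroup M] [Module ℂ M] [AddCommGroup N] [Module ℂ N]
    [AddCommGroup P] [Module ℂ P]
    (S : Finset ι) (f : ι → M →ₗ[ℂ] N) (g : N →ₗ[ℂ] P) :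
    g ∘ₗ (∑ i ∈ S, f i) = ∑ i ∈ S, g ∘ₗ f i := by
  ext v; simp

/-- Reindexing a double sum over vertices and edges with prescribed head. -/
lemma sum_fiber [Fintype I] [Fintype Ω] [DecidableEq I] (u : Ω → I)
    {M : Type*} [AddCommMonoid M] (f : ∀ k, {e : Ω // u e = k} → M) :
    ∑ k, ∑ e : {e : Ω // u e = k}, f k e = ∑ e : Ω, f (u e) ⟨e, rfl⟩ := by
  rw [Finset.sum_sigma']
  exact Finset.sum_nbij' (fun p => p.2.1) (fun e => ⟨u e, e, rfl⟩)
    (by simp) (by simp) (by rintro ⟨k, e, rfl⟩ _; rfl) (by simp)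
    (by rintro ⟨k, e, rfl⟩ _; rfl)

/-- Trace-pairing nondegeneracy. -/
lemma trace_nondegen {M N : Type*} [AddCommGroup M] [Module ℂ M]
    [FiniteDimensional ℂ M] [AddCommGroup N] [Module ℂ N]
    (A : N →ₗ[ℂ] M) (h : ∀ C : M →ₗ[ℂ] N, LinearMap.trace ℂ M (A ∘ₗ C) = 0) :
    A = 0 := by
  ext y
  by_contra hy
  obtain ⟨g, hg⟩ : ∃ g : Module.Dual ℂ M, g (A y) ≠ 0 := by
    by_contra h'
    push_neg at h'
    exact hy ((Module.forall_dual_apply_eq_zero_iff ℂ (A y)).mp h')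
  have h1 : A ∘ₗ LinearMap.smulRight g y = LinearMap.smulRight g (A y) := by
    ext v; simp
  have h2 : LinearMap.trace ℂ M (LinearMap.smulRight g (A y)) = g (A y) := by
    have h3 : LinearMap.smulRight g (A y) = dualTensorHom ℂ M M (g ⊗ₜ[ℂ] (A y)) := by
      ext v; simp [dualTensorHom_apply]
    rw [h3, LinearMap.trace_eq_contract_apply, contractLeft_apply]
  have := h (LinearMap.smulRight g y)
  rw [h1, h2] at this
  exact hg this

section Main

variable {s t : Ω → I}
variable {V₁ W₁ V₂ W₂ : I → Type*}
  [∀ k, AddCommGroup (V₁ k)] [∀ k, Module ℂ (V₁ k)]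
  [∀ k, AddCommGroup (W₁ k)] [∀ k, Module ℂ (W₁ k)]
  [∀ k, AddCommGroup (V₂ k)] [∀ k, Module ℂ (V₂ k)]
  [∀ k, AddCommGroup (W₂ k)] [∀ k, Module ℂ (W₂ k)]

/-- `alphaMap` as a linear map. -/
def Amap (R₁ : FramedRep s t V₁ W₁) (R₂ : FramedRep s t V₂ W₂) :
    (∀ k, V₁ k →ₗ[ℂ] V₂ k) →ₗ[ℂ] ELL s t V₁ W₁ V₂ W₂ where
  toFun := alphaMap R₁ R₂
  map_add' ξ ζ := by
    simp only [alphaMap, Prod.mk_add_mk, Prod.mk.injEq]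
    refine ⟨?_, ?_, ?_, ?_⟩ <;> funext e <;> ext v <;> simp <;> abel
  map_smul' c ξ := by
    simp only [alphaMap, Prod.smul_mk, Prod.mk.injEq, RingHom.id_apply]
    refine ⟨?_, ?_, ?_, ?_⟩ <;> funext e <;> ext v <;> simp [smul_sub]

/-- `betaMap` as a linear map. -/
def Bmap [Fintype Ω] [DecidableEq I] (eps : Ω → ℂ)
    (R₁ : FramedRep s t V₁ W₁) (R₂ : FramedRep s t V₂ W₂) :
    ELL s t V₁ W₁ V₂ W₂ →ₗ[ℂ] (∀ k, V₁ k →ₗ[ℂ] V₂ k) where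
  toFun x k := betaMap eps R₁ R₂ x k
  map_add' x y := by
    funext k
    simp only [betaMap, Pi.add_apply, Prod.fst_add, Prod.snd_add,
      LinearMap.comp_add, LinearMap.add_comp, smul_add, Finset.sum_add_distrib]
    abel
  map_smul' c x := by
    funext k
    simp only [betaMap, Pi.smul_apply, Prod.smul_fst, Prod.smul_snd,
      LinearMap.comp_smul, LinearMap.smul_comp, RingHom.id_apply, ← smul_add]
    simp only [smul_add, Finset.smul_sum, smul_comm c]


section BetaAlpha

lemma conj_sub (ξ : ∀ k, V₁ k →ₗ[ℂ] V₂ k) {a k : I} (h : a = k)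
    (f₁ : V₁ a →ₗ[ℂ] V₁ a) (f₂ : V₂ a →ₗ[ℂ] V₂ a) :
    lcast V₂ h ∘ₗ (f₂ ∘ₗ ξ a - ξ a ∘ₗ f₁) ∘ₗ lcast V₁ h.symm
      = (lcast V₂ h ∘ₗ f₂ ∘ₗ lcast V₂ h.symm) ∘ₗ ξ k
        - ξ k ∘ₗ (lcast V₁ h ∘ₗ f₁ ∘ₗ lcast V₁ h.symm) := by
  subst h; rfl

lemma inner_t (R₁ : FramedRep s t V₁ W₁) (R₂ : FramedRep s t V₂ W₂)
    (ξ : ∀ k, V₁ k →ₗ[ℂ] V₂ k) (e : Ω) :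
    R₂.Bp e ∘ₗ (R₂.Bm e ∘ₗ ξ (t e) - ξ (s e) ∘ₗ R₁.Bm e)
      + (R₂.Bp e ∘ₗ ξ (s e) - ξ (t e) ∘ₗ R₁.Bp e) ∘ₗ R₁.Bm e
      = (R₂.Bp e ∘ₗ R₂.Bm e) ∘ₗ ξ (t e) - ξ (t e) ∘ₗ (R₁.Bp e ∘ₗ R₁.Bm e) := by
  ext v; simp

lemma inner_s (R₁ : FramedRep s t V₁ W₁) (R₂ : FramedRep s t V₂ W₂)
    (ξ : ∀ k, V₁ k →ₗ[ℂ] V₂ k) (e : Ω) :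
    R₂.Bm e ∘ₗ (R₂.Bp e ∘ₗ ξ (s e) - ξ (t e) ∘ₗ R₁.Bp e)
      + (R₂.Bm e ∘ₗ ξ (t e) - ξ (s e) ∘ₗ R₁.Bm e) ∘ₗ R₁.Bp e
      = (R₂.Bm e ∘ₗ R₂.Bp e) ∘ₗ ξ (s e) - ξ (s e) ∘ₗ (R₁.Bm e ∘ₗ R₁.Bp e) := by
  ext v; simp

lemma betaMap_alphaMap [Fintype Ω] [DecidableEq I] (eps : Ω → ℂ)
    (R₁ : FramedRep s t V₁ W₁) (R₂ : FramedRep s t V₂ W₂)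
    (hμ₁ : R₁.MuZero eps) (hμ₂ : R₂.MuZero eps)
    (ξ : ∀ k, V₁ k →ₗ[ℂ] V₂ k) (k : I) :
    betaMap eps R₁ R₂ (alphaMap R₁ R₂ ξ) k = 0 := by
  have key : betaMap eps R₁ R₂ (alphaMap R₁ R₂ ξ) k
      = ((∑ e : {e : Ω // t e = k},
            eps e.1 • (lcast V₂ e.2 ∘ₗ R₂.Bp e.1 ∘ₗ R₂.Bm e.1 ∘ₗ lcast V₂ e.2.symm))
        + (∑ e : {e : Ω // s e = k},
            (-eps e.1) • (lcast V₂ e.2 ∘ₗ R₂.Bm e.1 ∘ₗ R₂.Bp e.1 ∘ₗ lcast V₂ e.2.symm))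
        + R₂.i k ∘ₗ R₂.j k) ∘ₗ ξ k
      - ξ k ∘ₗ ((∑ e : {e : Ω // t e = k},
            eps e.1 • (lcast V₁ e.2 ∘ₗ R₁.Bp e.1 ∘ₗ R₁.Bm e.1 ∘ₗ lcast V₁ e.2.symm))
        + (∑ e : {e : Ω // s e = k},
            (-eps e.1) • (lcast V₁ e.2 ∘ₗ R₁.Bm e.1 ∘ₗ R₁.Bp e.1 ∘ₗ lcast V₁ e.2.symm))
        + R₁.i k ∘ₗ R₁.j k) := by
    rw [betaMap]
    rw [Finset.sum_congr rfl (fun (e : {e : Ω // t e = k}) _ => by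
      rw [show R₂.Bp e.1 ∘ₗ (alphaMap R₁ R₂ ξ).2.1 e.1
            + (alphaMap R₁ R₂ ξ).1 e.1 ∘ₗ R₁.Bm e.1
          = (R₂.Bp e.1 ∘ₗ R₂.Bm e.1) ∘ₗ ξ (t e.1)
            - ξ (t e.1) ∘ₗ (R₁.Bp e.1 ∘ₗ R₁.Bm e.1) from inner_t R₁ R₂ ξ e.1,
        conj_sub ξ e.2])]
    rw [Finset.sum_congr rfl (fun (e : {e : Ω // s e = k}) _ => by
      rw [show R₂.Bm e.1 ∘ₗ (alphaMap R₁ R₂ ξ).1 e.1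
            + (alphaMap R₁ R₂ ξ).2.1 e.1 ∘ₗ R₁.Bp e.1
          = (R₂.Bm e.1 ∘ₗ R₂.Bp e.1) ∘ₗ ξ (s e.1)
            - ξ (s e.1) ∘ₗ (R₁.Bm e.1 ∘ₗ R₁.Bp e.1) from inner_s R₁ R₂ ξ e.1,
        conj_sub ξ e.2])]
    rw [show R₂.i k ∘ₗ (alphaMap R₁ R₂ ξ).2.2.2 k = (R₂.i k ∘ₗ R₂.j k) ∘ₗ ξ k from by
        ext v; simp [alphaMap]]
    rw [show (alphaMap R₁ R₂ ξ).2.2.1 k ∘ₗ R₁.j k = -(ξ k ∘ₗ (R₁.i k ∘ₗ R₁.j k)) from by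
        ext v; simp [alphaMap]]
    simp only [smul_sub, LinearMap.smul_comp, LinearMap.comp_smul,
      Finset.sum_sub_distrib, LinearMap.add_comp, LinearMap.comp_add,
      sum_comp'', comp_sum'', LinearMap.comp_assoc]
    abel
  rw [key, hμ₂ k, hμ₁ k]
  simp


lemma alphaMap_eq_zero (R₁ : FramedRep s t V₁ W₁) (R₂ : FramedRep s t V₂ W₂)
    (h₂ : R₂.IsStable) (ξ : ∀ k, V₁ k →ₗ[ℂ] V₂ k)
    (hξ : alphaMap R₁ R₂ ξ = 0) : ξ = 0 := by
  have h1 : ∀ e, R₂.Bp e ∘ₗ ξ (s e) = ξ (t e) ∘ₗ R₁.Bp e := by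
    intro e
    have h := congrFun (congrArg Prod.fst hξ) e
    simpa [alphaMap, sub_eq_zero] using h
  have h2' : ∀ e, R₂.Bm e ∘ₗ ξ (t e) = ξ (s e) ∘ₗ R₁.Bm e := by
    intro e
    have h := congrFun (congrArg (fun x => x.2.1) hξ) e
    simpa [alphaMap, sub_eq_zero] using h
  have h4 : ∀ k, R₂.j k ∘ₗ ξ k = 0 := by
    intro k
    have h := congrFun (congrArg (fun x => x.2.2.2) hξ) k
    simpa [alphaMap] using h
  have hS : ∀ k, LinearMap.range (ξ k) = ⊥ := by
    apply h₂
    · rintro e x ⟨y, rfl⟩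
      exact ⟨R₁.Bp e y, (LinearMap.ext_iff.mp (h1 e) y).symm⟩
    · rintro e x ⟨y, rfl⟩
      exact ⟨R₁.Bm e y, (LinearMap.ext_iff.mp (h2' e) y).symm⟩
    · rintro k x ⟨y, rfl⟩
      exact LinearMap.ext_iff.mp (h4 k) y
  funext k
  exact LinearMap.range_eq_bot.mp (hS k)

section Pairing

variable [Fintype I] [DecidableEq I]
variable [∀ k, FiniteDimensional ℂ (V₁ k)] [∀ k, FiniteDimensional ℂ (V₂ k)]

/-- The trace pairing, as a map to the dual. -/
def Phi : (∀ k, V₂ k →ₗ[ℂ] V₁ k) →ₗ[ℂ] Module.Dual ℂ (∀ k, V₁ k →ₗ[ℂ] V₂ k) where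
  toFun η :=
    { toFun := fun ξ => ∑ k, LinearMap.trace ℂ (V₁ k) (η k ∘ₗ ξ k)
      map_add' := by
        intro ξ ζ
        simp [LinearMap.comp_add, Finset.sum_add_distrib]
      map_smul' := by
        intro c ξ
        simp [LinearMap.comp_smul, Finset.mul_sum] }
  map_add' η θ := by
    ext ξ
    simp [LinearMap.add_comp, Finset.sum_add_distrib]
  map_smul' c η := by
    ext ξ
    simp [LinearMap.smul_comp, Finset.mul_sum]

lemma Phi_apply (η : ∀ k, V₂ k →ₗ[ℂ] V₁ k) (ξ : ∀ k, V₁ k →ₗ[ℂ] V₂ k) :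
    Phi η ξ = ∑ k, LinearMap.trace ℂ (V₁ k) (η k ∘ₗ ξ k) := rfl

lemma Phi_injective :
    Function.Injective (Phi (V₁ := V₁) (V₂ := V₂)) := by
  refine (injective_iff_map_eq_zero (Phi (V₁ := V₁) (V₂ := V₂))).mpr fun η hη => ?_
  funext k
  refine (trace_nondegen (η k) fun ζ => ?_).trans rfl
  have h := DFunLike.congr_fun hη (Pi.single k ζ)
  rw [Phi_apply, Fintype.sum_eq_single k (fun l hl => by
    rw [Pi.single_eq_of_ne hl]; simp)] at h
  rw [Pi.single_eq_same] at h
  simpa using h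

lemma Phi_surjective :
    Function.Surjective (Phi (V₁ := V₁) (V₂ := V₂)) := by
  rw [← LinearMap.range_eq_top]
  apply Submodule.eq_top_of_finrank_eq
  rw [LinearMap.finrank_range_of_inj (Phi_injective (V₁ := V₁) (V₂ := V₂)), Subspace.dual_finrank_eq,
    Module.finrank_pi_fintype, Module.finrank_pi_fintype]
  simp [Module.finrank_linearMap, mul_comm]


section Surj

variable [Fintype Ω]
variable [∀ k, FiniteDimensional ℂ (W₁ k)] [∀ k, FiniteDimensional ℂ (W₂ k)]

lemma trace_beta (eps : Ω → ℂ)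
    (R₁ : FramedRep s t V₁ W₁) (R₂ : FramedRep s t V₂ W₂)
    (η : ∀ k, V₂ k →ₗ[ℂ] V₁ k) (x : ELL s t V₁ W₁ V₂ W₂) :
    ∑ k, LinearMap.trace ℂ (V₁ k) (η k ∘ₗ betaMap eps R₁ R₂ x k)
      = ∑ e : Ω, eps e * LinearMap.trace ℂ (V₁ (t e))
            (η (t e) ∘ₗ (R₂.Bp e ∘ₗ x.2.1 e + x.1 e ∘ₗ R₁.Bm e))
        + ∑ e : Ω, (-eps e) * LinearMap.trace ℂ (V₁ (s e))
            (η (s e) ∘ₗ (R₂.Bm e ∘ₗ x.1 e + x.2.1 e ∘ₗ R₁.Bp e))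
        + ∑ k, LinearMap.trace ℂ (V₁ k) (η k ∘ₗ (R₂.i k ∘ₗ x.2.2.2 k))
        + ∑ k, LinearMap.trace ℂ (V₁ k) (η k ∘ₗ (x.2.2.1 k ∘ₗ R₁.j k)) := by
  have step1 : ∑ k, LinearMap.trace ℂ (V₁ k) (η k ∘ₗ betaMap eps R₁ R₂ x k)
      = (∑ k, ∑ e : {e : Ω // t e = k}, eps e.1 * LinearMap.trace ℂ (V₁ k)
            (η k ∘ₗ lcast V₂ e.2 ∘ₗ (R₂.Bp e.1 ∘ₗ x.2.1 e.1 + x.1 e.1 ∘ₗ R₁.Bm e.1)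
              ∘ₗ lcast V₁ e.2.symm))
        + (∑ k, ∑ e : {e : Ω // s e = k}, (-eps e.1) * LinearMap.trace ℂ (V₁ k)
            (η k ∘ₗ lcast V₂ e.2 ∘ₗ (R₂.Bm e.1 ∘ₗ x.1 e.1 + x.2.1 e.1 ∘ₗ R₁.Bp e.1)
              ∘ₗ lcast V₁ e.2.symm))
        + ∑ k, LinearMap.trace ℂ (V₁ k) (η k ∘ₗ (R₂.i k ∘ₗ x.2.2.2 k))
        + ∑ k, LinearMap.trace ℂ (V₁ k) (η k ∘ₗ (x.2.2.1 k ∘ₗ R₁.j k)) := by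
    simp only [betaMap, LinearMap.comp_add, map_add, comp_sum'', map_sum,
      LinearMap.comp_smul, map_smul, smul_eq_mul, Finset.sum_add_distrib,
      LinearMap.comp_assoc]
  rw [step1,
    sum_fiber t (fun k (e : {e : Ω // t e = k}) => eps e.1 * LinearMap.trace ℂ (V₁ k)
      (η k ∘ₗ lcast V₂ e.2 ∘ₗ (R₂.Bp e.1 ∘ₗ x.2.1 e.1 + x.1 e.1 ∘ₗ R₁.Bm e.1)
        ∘ₗ lcast V₁ e.2.symm)),
    sum_fiber s (fun k (e : {e : Ω // s e = k}) => (-eps e.1) * LinearMap.trace ℂ (V₁ k)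
      (η k ∘ₗ lcast V₂ e.2 ∘ₗ (R₂.Bm e.1 ∘ₗ x.1 e.1 + x.2.1 e.1 ∘ₗ R₁.Bp e.1)
        ∘ₗ lcast V₁ e.2.symm))]
  simp only [lcast_rfl, LinearMap.id_comp, LinearMap.comp_id]

variable {eps : Ω → ℂ}
variable {R₁ : FramedRep s t V₁ W₁} {R₂ : FramedRep s t V₂ W₂}
variable {η : ∀ k, V₂ k →ₗ[ℂ] V₁ k}

lemma eta_i
    (hη : ∀ x : ELL s t V₁ W₁ V₂ W₂,
      ∑ k, LinearMap.trace ℂ (V₁ k) (η k ∘ₗ betaMap eps R₁ R₂ x k) = 0)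
    (k₀ : I) : η k₀ ∘ₗ R₂.i k₀ = 0 := by
  apply trace_nondegen
  intro J₀
  have h := hη ⟨0, 0, 0, Pi.single k₀ J₀⟩
  rw [trace_beta] at h
  simp only [Pi.zero_apply, LinearMap.zero_comp, LinearMap.comp_zero, add_zero,
    zero_add, map_zero, mul_zero, Finset.sum_const_zero] at h
  rw [Fintype.sum_eq_single k₀ (fun l hl => by
    rw [Pi.single_eq_of_ne hl]; simp)] at h
  rw [Pi.single_eq_same] at h
  rw [← LinearMap.comp_assoc] at h
  exact h

lemma eta_j
    (hη : ∀ x : ELL s t V₁ W₁ V₂ W₂,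
      ∑ k, LinearMap.trace ℂ (V₁ k) (η k ∘ₗ betaMap eps R₁ R₂ x k) = 0)
    (k₀ : I) : R₁.j k₀ ∘ₗ η k₀ = 0 := by
  apply trace_nondegen
  intro Iw₀
  have h := hη ⟨0, 0, Pi.single k₀ Iw₀, 0⟩
  rw [trace_beta] at h
  simp only [Pi.zero_apply, LinearMap.zero_comp, LinearMap.comp_zero, add_zero,
    zero_add, map_zero, mul_zero, Finset.sum_const_zero] at h
  rw [Fintype.sum_eq_single k₀ (fun l hl => by
    rw [Pi.single_eq_of_ne hl]; simp)] at h
  rw [Pi.single_eq_same] at h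
  rw [← LinearMap.comp_assoc, trace_comp_comm' (R₁.j k₀) (η k₀ ∘ₗ Iw₀),
    ← LinearMap.comp_assoc] at h
  exact h

lemma eta_Bm (heps : ∀ e, eps e ≠ 0)
    (hη : ∀ x : ELL s t V₁ W₁ V₂ W₂,
      ∑ k, LinearMap.trace ℂ (V₁ k) (η k ∘ₗ betaMap eps R₁ R₂ x k) = 0)
    (e₀ : Ω) : R₁.Bm e₀ ∘ₗ η (t e₀) = η (s e₀) ∘ₗ R₂.Bm e₀ := by
  letI := Classical.decEq Ω
  rw [← sub_eq_zero]
  apply trace_nondegen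
  intro C
  have h := hη ⟨Pi.single e₀ C, 0, 0, 0⟩
  rw [trace_beta] at h
  simp only [Pi.zero_apply, LinearMap.zero_comp, LinearMap.comp_zero, add_zero,
    zero_add, map_zero, mul_zero, Finset.sum_const_zero] at h
  rw [Fintype.sum_eq_single e₀ (fun e he => by
      rw [Pi.single_eq_of_ne he]; simp),
    Fintype.sum_eq_single e₀ (fun e he => by
      rw [Pi.single_eq_of_ne he]; simp)] at h
  try simp only [Pi.single_eq_same] at h
  have hc1 : LinearMap.trace ℂ (V₁ (t e₀)) (η (t e₀) ∘ₗ (C ∘ₗ R₁.Bm e₀))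
      = LinearMap.trace ℂ (V₁ (s e₀)) ((R₁.Bm e₀ ∘ₗ η (t e₀)) ∘ₗ C) := by
    rw [← LinearMap.comp_assoc, trace_comp_comm' (R₁.Bm e₀) (η (t e₀) ∘ₗ C),
      ← LinearMap.comp_assoc]
  have hc2 : LinearMap.trace ℂ (V₁ (s e₀)) (η (s e₀) ∘ₗ (R₂.Bm e₀ ∘ₗ C))
      = LinearMap.trace ℂ (V₁ (s e₀)) ((η (s e₀) ∘ₗ R₂.Bm e₀) ∘ₗ C) := by
    rw [LinearMap.comp_assoc]
  rw [hc1, hc2] at h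
  rw [LinearMap.sub_comp, map_sub]
  have := heps e₀
  have hsum : eps e₀ * (LinearMap.trace ℂ (V₁ (s e₀)) ((R₁.Bm e₀ ∘ₗ η (t e₀)) ∘ₗ C)
      - LinearMap.trace ℂ (V₁ (s e₀)) ((η (s e₀) ∘ₗ R₂.Bm e₀) ∘ₗ C)) = 0 := by
    rw [mul_sub]; linear_combination h
  rcases mul_eq_zero.mp hsum with h' | h'
  · exact absurd h' this
  · exact h'

lemma eta_Bp (heps : ∀ e, eps e ≠ 0)
    (hη : ∀ x : ELL s t V₁ W₁ V₂ W₂,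
      ∑ k, LinearMap.trace ℂ (V₁ k) (η k ∘ₗ betaMap eps R₁ R₂ x k) = 0)
    (e₀ : Ω) : η (t e₀) ∘ₗ R₂.Bp e₀ = R₁.Bp e₀ ∘ₗ η (s e₀) := by
  letI := Classical.decEq Ω
  rw [← sub_eq_zero]
  apply trace_nondegen
  intro C
  have h := hη ⟨0, Pi.single e₀ C, 0, 0⟩
  rw [trace_beta] at h
  simp only [Pi.zero_apply, LinearMap.zero_comp, LinearMap.comp_zero, add_zero,
    zero_add, map_zero, mul_zero, Finset.sum_const_zero] at h
  rw [Fintype.sum_eq_single e₀ (fun e he => by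
      rw [Pi.single_eq_of_ne he]; simp),
    Fintype.sum_eq_single e₀ (fun e he => by
      rw [Pi.single_eq_of_ne he]; simp)] at h
  try simp only [Pi.single_eq_same] at h
  have hc1 : LinearMap.trace ℂ (V₁ (t e₀)) (η (t e₀) ∘ₗ (R₂.Bp e₀ ∘ₗ C))
      = LinearMap.trace ℂ (V₁ (t e₀)) ((η (t e₀) ∘ₗ R₂.Bp e₀) ∘ₗ C) := by
    rw [LinearMap.comp_assoc]
  have hc2 : LinearMap.trace ℂ (V₁ (s e₀)) (η (s e₀) ∘ₗ (C ∘ₗ R₁.Bp e₀))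
      = LinearMap.trace ℂ (V₁ (t e₀)) ((R₁.Bp e₀ ∘ₗ η (s e₀)) ∘ₗ C) := by
    rw [← LinearMap.comp_assoc, trace_comp_comm' (R₁.Bp e₀) (η (s e₀) ∘ₗ C),
      ← LinearMap.comp_assoc]
  rw [hc1, hc2] at h
  rw [LinearMap.sub_comp, map_sub]
  have := heps e₀
  have hsum : eps e₀ * (LinearMap.trace ℂ (V₁ (t e₀)) ((η (t e₀) ∘ₗ R₂.Bp e₀) ∘ₗ C)
      - LinearMap.trace ℂ (V₁ (t e₀)) ((R₁.Bp e₀ ∘ₗ η (s e₀)) ∘ₗ C)) = 0 := by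
    rw [mul_sub]; linear_combination h
  rcases mul_eq_zero.mp hsum with h' | h'
  · exact absurd h' this
  · exact h'

lemma eta_zero (heps : ∀ e, eps e ≠ 0) (h₁ : R₁.IsStable)
    (hη : ∀ x : ELL s t V₁ W₁ V₂ W₂,
      ∑ k, LinearMap.trace ℂ (V₁ k) (η k ∘ₗ betaMap eps R₁ R₂ x k) = 0) :
    η = 0 := by
  have hS : ∀ k, LinearMap.range (η k) = ⊥ := by
    apply h₁
    · rintro e x ⟨y, rfl⟩
      exact ⟨R₂.Bp e y, LinearMap.ext_iff.mp (eta_Bp heps hη e) y⟩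
    · rintro e x ⟨y, rfl⟩
      exact ⟨R₂.Bm e y, (LinearMap.ext_iff.mp (eta_Bm heps hη e) y).symm⟩
    · rintro k x ⟨y, rfl⟩
      exact LinearMap.ext_iff.mp (eta_j hη k) y
  funext k
  exact LinearMap.range_eq_bot.mp (hS k)

lemma Bmap_surjective (heps : ∀ e, eps e ≠ 0) (h₁ : R₁.IsStable) :
    Function.Surjective (Bmap eps R₁ R₂) := by
  by_contra hsur
  rw [← LinearMap.range_eq_top] at hsur
  have hlt : LinearMap.range (Bmap eps R₁ R₂) < ⊤ := lt_top_iff_ne_top.mpr hsur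
  obtain ⟨φ, hφ0, hφ⟩ := Submodule.exists_dual_map_eq_bot_of_lt_top hlt inferInstance
  obtain ⟨η', rfl⟩ := Phi_surjective φ
  have hvanish : ∀ x : ELL s t V₁ W₁ V₂ W₂,
      ∑ k, LinearMap.trace ℂ (V₁ k) (η' k ∘ₗ betaMap eps R₁ R₂ x k) = 0 := by
    intro x
    have hmem : Phi η' (Bmap eps R₁ R₂ x)
        ∈ Submodule.map (Phi η') (LinearMap.range (Bmap eps R₁ R₂)) :=
      ⟨_, ⟨x, rfl⟩, rfl⟩
    rw [hφ] at hmem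
    have h' := by simpa [Phi_apply] using hmem
    exact h'
  rw [eta_zero heps h₁ hvanish] at hφ0
  exact hφ0 (map_zero Phi)

end Surj

end Pairing

end BetaAlpha


section Count

lemma comb [Fintype I] [Fintype Ω] [DecidableEq I] (hloop : ∀ e : Ω, s e ≠ t e)
    (a b : I → ℤ) :
    ∑ k : I, ∑ l : I,
        (if k = l then (2 : ℤ)
          else -((Finset.univ.filter
            (fun e : Ω => (s e = k ∧ t e = l) ∨ (s e = l ∧ t e = k))).card : ℤ))
        * a k * b l
      = 2 * ∑ k : I, a k * b k
        - ∑ e : Ω, (a (s e) * b (t e) + a (t e) * b (s e)) := by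
  have key : ∀ k l : I,
      (if k = l then (2 : ℤ)
        else -((Finset.univ.filter
          (fun e : Ω => (s e = k ∧ t e = l) ∨ (s e = l ∧ t e = k))).card : ℤ))
        * a k * b l
      = (if l = k then 2 * (a k * b k) else 0)
        - ∑ e : Ω, ((if k = s e ∧ l = t e then a (s e) * b (t e) else 0)
            + (if k = t e ∧ l = s e then a (t e) * b (s e) else 0)) := by
    intro k l
    by_cases hkl : k = l
    · subst hkl
      rw [if_pos rfl, if_pos rfl]
      rw [Finset.sum_congr rfl (fun e _ => show
          (if k = s e ∧ k = t e then a (s e) * b (t e) else 0)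
            + (if k = t e ∧ k = s e then a (t e) * b (s e) else 0) = 0 by
        rw [if_neg (fun h => hloop e (h.1.symm.trans h.2)),
          if_neg (fun h => hloop e (h.2.symm.trans h.1))]
        ring)]
      simp; ring
    · rw [if_neg hkl, if_neg (fun h => hkl h.symm), zero_sub, Finset.card_filter]
      push_cast
      rw [neg_mul, neg_mul, neg_inj, Finset.sum_mul, Finset.sum_mul]
      refine Finset.sum_congr rfl fun e _ => ?_
      by_cases h1 : k = s e ∧ l = t e
      · obtain ⟨hk, hl⟩ := h1
        subst hk; subst hl
        rw [if_pos (Or.inl ⟨rfl, rfl⟩), if_pos ⟨rfl, rfl⟩, if_neg, one_mul]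
        · ring
        · rintro ⟨h1', h2'⟩; exact hloop e h1'
      · by_cases h2 : k = t e ∧ l = s e
        · obtain ⟨hk, hl⟩ := h2
          subst hk; subst hl
          rw [if_pos (Or.inr ⟨rfl, rfl⟩), if_neg h1, if_pos ⟨rfl, rfl⟩, one_mul]
          ring
        · rw [if_neg, if_neg h1, if_neg h2]
          · ring
          · rintro (⟨ha, hb⟩ | ⟨ha, hb⟩)
            · exact h1 ⟨ha.symm, hb.symm⟩
            · exact h2 ⟨hb.symm, ha.symm⟩
  rw [Finset.sum_congr rfl fun k _ => Finset.sum_congr rfl fun l _ => key k l]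
  simp only [Finset.sum_sub_distrib]
  have hfirst : ∑ k : I, ∑ l : I, (if l = k then 2 * (a k * b k) else 0)
      = 2 * ∑ k : I, a k * b k := by
    rw [Finset.mul_sum]
    refine Finset.sum_congr rfl fun k _ => ?_
    simp [Finset.sum_ite_eq']
  have hsecond : ∑ k : I, ∑ l : I, ∑ e : Ω,
        ((if k = s e ∧ l = t e then a (s e) * b (t e) else 0)
          + (if k = t e ∧ l = s e then a (t e) * b (s e) else 0))
      = ∑ e : Ω, (a (s e) * b (t e) + a (t e) * b (s e)) := by
    calc ∑ k : I, ∑ l : I, ∑ e : Ω, ((if k = s e ∧ l = t e then a (s e) * b (t e) else 0)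
            + (if k = t e ∧ l = s e then a (t e) * b (s e) else 0))
        = ∑ k : I, ∑ e : Ω, ∑ l : I, ((if k = s e ∧ l = t e then a (s e) * b (t e) else 0)
            + (if k = t e ∧ l = s e then a (t e) * b (s e) else 0)) :=
          Finset.sum_congr rfl fun k _ => Finset.sum_comm
      _ = ∑ e : Ω, ∑ k : I, ∑ l : I, ((if k = s e ∧ l = t e then a (s e) * b (t e) else 0)
            + (if k = t e ∧ l = s e then a (t e) * b (s e) else 0)) := Finset.sum_comm
      _ = ∑ e : Ω, (a (s e) * b (t e) + a (t e) * b (s e)) := by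
          refine Finset.sum_congr rfl fun e _ => ?_
          simp [Finset.sum_add_distrib, ite_and, Finset.sum_ite_eq']
  rw [hfirst, hsecond]

lemma finrank_L [Fintype I]
    [∀ k, FiniteDimensional ℂ (V₁ k)] [∀ k, FiniteDimensional ℂ (V₂ k)] :
    Module.finrank ℂ (∀ k, V₁ k →ₗ[ℂ] V₂ k)
      = ∑ k, Module.finrank ℂ (V₁ k) * Module.finrank ℂ (V₂ k) := by
  rw [Module.finrank_pi_fintype]
  exact Finset.sum_congr rfl fun k _ => Module.finrank_linearMap ℂ ℂ (V₁ k) (V₂ k)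

lemma finrank_ELL [Fintype I] [Fintype Ω]
    [∀ k, FiniteDimensional ℂ (V₁ k)] [∀ k, FiniteDimensional ℂ (W₁ k)]
    [∀ k, FiniteDimensional ℂ (V₂ k)] [∀ k, FiniteDimensional ℂ (W₂ k)] :
    Module.finrank ℂ (ELL s t V₁ W₁ V₂ W₂)
      = (∑ e : Ω, Module.finrank ℂ (V₁ (s e)) * Module.finrank ℂ (V₂ (t e)))
        + (∑ e : Ω, Module.finrank ℂ (V₁ (t e)) * Module.finrank ℂ (V₂ (s e)))
        + (∑ k, Module.finrank ℂ (W₁ k) * Module.finrank ℂ (V₂ k))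
        + (∑ k, Module.finrank ℂ (V₁ k) * Module.finrank ℂ (W₂ k)) := by
  rw [Module.finrank_prod, Module.finrank_prod, Module.finrank_prod,
    Module.finrank_pi_fintype, Module.finrank_pi_fintype,
    Module.finrank_pi_fintype, Module.finrank_pi_fintype]
  simp only [Module.finrank_linearMap]
  ring

lemma quot_finrank {M N P : Type*} [AddCommGroup M] [Module ℂ M] [FiniteDimensional ℂ M]
    [AddCommGroup N] [Module ℂ N] [FiniteDimensional ℂ N]
    [AddCommGroup P] [Module ℂ P] [FiniteDimensional ℂ P]
    (f : M →ₗ[ℂ] N) (g : N →ₗ[ℂ] P) (hle : LinearMap.range f ≤ LinearMap.ker g)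
    (hf : Function.Injective f) (hg : Function.Surjective g) :
    Module.finrank ℂ
        ((LinearMap.ker g) ⧸ (LinearMap.range f).comap (LinearMap.ker g).subtype)
      + Module.finrank ℂ M + Module.finrank ℂ P = Module.finrank ℂ N := by
  have e1 : Module.finrank ℂ ((LinearMap.range f).comap (LinearMap.ker g).subtype)
      = Module.finrank ℂ M := by
    rw [LinearEquiv.finrank_eq (Submodule.comapSubtypeEquivOfLe hle),
      LinearMap.finrank_range_of_inj hf]
  have e3 := LinearMap.finrank_range_add_finrank_ker g
  rw [LinearMap.range_eq_top.mpr hg, finrank_top] at e3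
  have e4 := Submodule.finrank_quotient_add_finrank
    ((LinearMap.range f).comap (LinearMap.ker g).subtype)
  omega

end Count

end Main

end AlphaBetaAux

/-- for stable framed representations `(B¹,i¹,j¹)`, `(B²,i²,j²)`
with `μ = 0`, one has `β²¹ ∘ α²¹ = 0`, `α²¹` is injective, `β²¹` is
surjective, and
`dim (Ker β²¹ / Im α²¹) = ∑_k (dim V¹_k dim W²_k + dim W¹_k dim V²_k)
  − ∑_{k,l} c_{kl} dim V¹_k dim V²_l`,
where `c_{kk} = 2` and `c_{kl} = −#{edges joining k and l}` for `k ≠ l`. -/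
theorem alpha_beta_complex_dim [Fintype I] [Fintype Ω] [DecidableEq I]
    {s t : Ω → I} (hloop : ∀ e, s e ≠ t e)
    (eps : Ω → ℂ) (heps : ∀ e, eps e ≠ 0)
    {V₁ W₁ V₂ W₂ : I → Type*}
    [∀ k, AddCommGroup (V₁ k)] [∀ k, Module ℂ (V₁ k)]
    [∀ k, FiniteDimensional ℂ (V₁ k)]
    [∀ k, AddCommGroup (W₁ k)] [∀ k, Module ℂ (W₁ k)]
    [∀ k, FiniteDimensional ℂ (W₁ k)]
    [∀ k, AddCommGroup (V₂ k)] [∀ k, Module ℂ (V₂ k)]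
    [∀ k, FiniteDimensional ℂ (V₂ k)]
    [∀ k, AddCommGroup (W₂ k)] [∀ k, Module ℂ (W₂ k)]
    [∀ k, FiniteDimensional ℂ (W₂ k)]
    (R₁ : FramedRep s t V₁ W₁) (R₂ : FramedRep s t V₂ W₂)
    (h₁ : R₁.IsStable) (h₂ : R₂.IsStable)
    (hμ₁ : R₁.MuZero eps) (hμ₂ : R₂.MuZero eps) :
    ∃ (A : (∀ k, V₁ k →ₗ[ℂ] V₂ k) →ₗ[ℂ] ELL s t V₁ W₁ V₂ W₂)
      (Bl : ELL s t V₁ W₁ V₂ W₂ →ₗ[ℂ] (∀ k, V₁ k →ₗ[ℂ] V₂ k)),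
      (∀ ξ, A ξ = alphaMap R₁ R₂ ξ) ∧
      (∀ x k, Bl x k = betaMap eps R₁ R₂ x k) ∧
      Bl ∘ₗ A = 0 ∧
      Function.Injective A ∧
      Function.Surjective Bl ∧
      (Module.finrank ℂ
          (LinearMap.ker Bl ⧸
            (LinearMap.range A).comap (LinearMap.ker Bl).subtype) : ℤ)
        = (∑ k : I, ((Module.finrank ℂ (V₁ k) * Module.finrank ℂ (W₂ k)
              + Module.finrank ℂ (W₁ k) * Module.finrank ℂ (V₂ k) : ℕ) : ℤ))
          - ∑ k : I, ∑ l : I,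
              (if k = l then (2 : ℤ)
                else -((Finset.univ.filter
                  (fun e : Ω => (s e = k ∧ t e = l) ∨ (s e = l ∧ t e = k))).card : ℤ))
              * (Module.finrank ℂ (V₁ k) : ℤ) * (Module.finrank ℂ (V₂ l) : ℤ) := by
  classical
  have hinj : Function.Injective (AlphaBetaAux.Amap R₁ R₂) :=
    (injective_iff_map_eq_zero (AlphaBetaAux.Amap R₁ R₂)).mpr
      fun ξ h => AlphaBetaAux.alphaMap_eq_zero R₁ R₂ h₂ ξ h
  have hsurj : Function.Surjective (AlphaBetaAux.Bmap eps R₁ R₂) :=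
    AlphaBetaAux.Bmap_surjective heps h₁
  have hcomp : (AlphaBetaAux.Bmap eps R₁ R₂) ∘ₗ (AlphaBetaAux.Amap R₁ R₂) = 0 := by
    apply LinearMap.ext
    intro ξ
    funext k
    exact AlphaBetaAux.betaMap_alphaMap eps R₁ R₂ hμ₁ hμ₂ ξ k
  refine ⟨AlphaBetaAux.Amap R₁ R₂, AlphaBetaAux.Bmap eps R₁ R₂,
    fun ξ => rfl, fun x k => rfl, hcomp, hinj, hsurj, ?_⟩
  have hle : LinearMap.range (AlphaBetaAux.Amap R₁ R₂)
      ≤ LinearMap.ker (AlphaBetaAux.Bmap eps R₁ R₂) := by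
    rintro y ⟨ξ, rfl⟩
    rw [LinearMap.mem_ker]
    funext k
    exact AlphaBetaAux.betaMap_alphaMap eps R₁ R₂ hμ₁ hμ₂ ξ k
  have hq := AlphaBetaAux.quot_finrank (AlphaBetaAux.Amap R₁ R₂)
    (AlphaBetaAux.Bmap eps R₁ R₂) hle hinj hsurj
  rw [AlphaBetaAux.finrank_L, AlphaBetaAux.finrank_ELL] at hq
  rw [AlphaBetaAux.comb hloop]
  push_cast
  simp only [Finset.sum_add_distrib]
  have e8 := congrArg (Nat.cast : ℕ → ℤ) hq
  push_cast at e8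
  linarith [e8]
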